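/- Let M be a pointed metric space and let Λ be a positive bounded linear functional on ℓ∞(M̃). The following statements are equivalent: (i) ‖Λ∘Φ‖ = ‖Λ‖; (ii) for every γ ∈ (0,1) there exist a subset A of M̃ and f in the closed unit ball of Lip_0(M) satisfying Λ(A) ≥ γ·Λ(M̃) and f(m_{x,y}) ≥ γ for all (x,y) ∈ A; (iii) for every γ ∈ (0,1) there exists a γ-cyclically monotonic subset A of M̃ satisfying Λ(A) ≥ γ·Λ(M̃). -/

import Mathlib

open scoped ENNReal

/-- The set `M̃ = {(x,y) : x ≠ y}` as a subtype. -/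
def Mt (M : Type*) : Type _ := {p : M × M // p.1 ≠ p.2}

variable {M : Type*} [MetricSpace M]

/-- `ℓ∞(M̃)`. -/
noncomputable abbrev ellInfty (M : Type*) : Type _ := ↥(lp (fun _ : Mt M => ℝ) ∞)

/-- A bounded linear functional on `ℓ∞(M̃)` is positive if it is nonnegative on
nonnegative functions. -/
def IsPositive {M : Type*} (Λ : ellInfty M →L[ℝ] ℝ) : Prop :=
  ∀ h : ellInfty M, (∀ p : Mt M, 0 ≤ h p) → 0 ≤ Λ h

/-- The indicator function of `A ⊆ M̃` as an element of `ℓ∞(M̃)`. -/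
noncomputable def indicLp {M : Type*} (A : Set (Mt M)) : ellInfty M :=
  ⟨A.indicator 1, memℓp_infty (by
    refine ⟨1, ?_⟩
    rintro r ⟨p, rfl⟩
    by_cases hp : p ∈ A <;>
      simp [Set.indicator_apply, hp])⟩

/-- The image of `Lip₀(M)` in `ℓ∞(M̃)` under the de Leeuw embedding `Φ`;
`Lip₀(M)` itself is identified with this submodule, carrying the induced
(Lipschitz) norm, and `Φ` is then the inclusion `(LipO M base).subtypeL`. -/
noncomputable def LipO (M : Type*) [MetricSpace M] (base : M) :
    Submodule ℝ (ellInfty M) where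
  carrier := {g | ∃ f : M → ℝ, f base = 0 ∧
    ∀ p : Mt M, g p = (f p.1.1 - f p.1.2) / dist p.1.1 p.1.2}
  add_mem' := by
    rintro g₁ g₂ ⟨f₁, hf₁, h₁⟩ ⟨f₂, hf₂, h₂⟩
    refine ⟨f₁ + f₂, by simp [hf₁, hf₂], fun p => ?_⟩
    have : (⇑(g₁ + g₂) : Mt M → ℝ) = ⇑g₁ + ⇑g₂ := lp.coeFn_add g₁ g₂
    rw [this]
    simp only [Pi.add_apply, h₁ p, h₂ p]
    ring
  zero_mem' := by
    refine ⟨0, rfl, fun p => ?_⟩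
    have : (⇑(0 : ellInfty M) : Mt M → ℝ) = 0 := lp.coeFn_zero _ _
    simp [this]
  smul_mem' := by
    rintro c g ⟨f, hf, h⟩
    refine ⟨c • f, by simp [hf], fun p => ?_⟩
    have : (⇑(c • g) : Mt M → ℝ) = c • ⇑g := lp.coeFn_smul c g
    rw [this]
    simp only [Pi.smul_apply, smul_eq_mul, h p]
    ring

open Classical in
/-- Evaluation of (the function represented by) `g ∈ Lip₀(M)` at `x`. -/
noncomputable def evalAux (base x : M) (g : ↥(LipO M base)) : ℝ :=
  if h : x = base then 0
  else ((g : ellInfty M) : Mt M → ℝ) ⟨(x, base), h⟩ * dist x base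

/-- The evaluation functional `δ_x : Lip₀(M) → ℝ`, `δ_x(f) = f(x)`
(recovering `f` from its de Leeuw transform). -/
noncomputable def deltaF (base x : M) : ↥(LipO M base) →L[ℝ] ℝ :=
  LinearMap.mkContinuous
    { toFun := evalAux base x
      map_add' := fun g₁ g₂ => by
        unfold evalAux
        split_ifs with h
        · simp
        · simp only [Submodule.coe_add, lp.coeFn_add, Pi.add_apply]
          erw [Pi.add_apply]
          ring
      map_smul' := fun c g => by
        unfold evalAux
        split_ifs with h
        · simp
        · simp only [Submodule.coe_smul, lp.coeFn_smul, Pi.smul_apply,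
            smul_eq_mul, RingHom.id_apply]
          erw [Pi.smul_apply, smul_eq_mul]
          ring }
    (dist x base)
    (by
      intro g
      simp only [LinearMap.coe_mk, AddHom.coe_mk]
      unfold evalAux
      split_ifs with h
      · subst h
        rw [norm_zero, dist_self, zero_mul]
      · have h1 : ‖((g : ellInfty M) : Mt M → ℝ) ⟨(x, base), h⟩‖ ≤ ‖(g : ellInfty M)‖ :=
          lp.norm_apply_le_norm ENNReal.top_ne_zero (g : ellInfty M) ⟨(x, base), h⟩
        have h2 : ‖(g : ellInfty M)‖ = ‖g‖ := rfl
        calc ‖((g : ellInfty M) : Mt M → ℝ) ⟨(x, base), h⟩ * dist x base‖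
            = ‖((g : ellInfty M) : Mt M → ℝ) ⟨(x, base), h⟩‖ * dist x base := by
              rw [norm_mul, Real.norm_eq_abs (dist x base), abs_of_nonneg dist_nonneg]
          _ ≤ ‖g‖ * dist x base := by
              exact mul_le_mul_of_nonneg_right (h2 ▸ h1) dist_nonneg
          _ = dist x base * ‖g‖ := mul_comm _ _)

/-- The Lipschitz-free space `F(M)`: the closed linear span of the evaluation
functionals inside the dual of `Lip₀(M)`. -/
noncomputable def FreeSpan (M : Type*) [MetricSpace M] (base : M) :
    Submodule ℝ (↥(LipO M base) →L[ℝ] ℝ) :=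
  Submodule.span ℝ (Set.range (deltaF base))

/-- The Lipschitz-free space `F(M)`: the closed linear span of the evaluation
functionals inside the dual of `Lip₀(M)`. -/
noncomputable def FreeSp (M : Type*) [MetricSpace M] (base : M) :
    Set (↥(LipO M base) →L[ℝ] ℝ) :=
  closure (FreeSpan M base : Set (↥(LipO M base) →L[ℝ] ℝ))

/-- The weak-star topology `σ(Lip₀(M), F(M))` on `Lip₀(M)`. -/
noncomputable def wstar (M : Type*) [MetricSpace M] (base : M) :
    TopologicalSpace ↥(LipO M base) :=
  TopologicalSpace.induced
    (fun g => fun μ : FreeSp M base => (μ : ↥(LipO M base) →L[ℝ] ℝ) g)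
    inferInstance

variable {M : Type*} [MetricSpace M]

/-- The de Leeuw quotient `f(m_{x,y}) = (f x - f y)/d(x,y)`. -/
noncomputable def mQ (f : M → ℝ) (p : Mt M) : ℝ :=
  (f p.1.1 - f p.1.2) / dist p.1.1 p.1.2

/-- `A ⊆ M̃` is `γ`-cyclically monotonic. -/
def GammaCM (γ : ℝ) (A : Set (Mt M)) : Prop :=
  ∀ (n : ℕ) (p : Fin (n + 1) → Mt M), (∀ i, p i ∈ A) →
    0 ≤ ∑ i : Fin (n + 1),
      min (dist (p i).1.1 (p (i + 1)).1.2 - γ * dist (p i).1.1 (p i).1.2)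
          (dist (p i).1.2 (p (i + 1)).1.2)

/-- `A ⊆ M̃` is cyclically monotonic. -/
def CyclMono (A : Set (Mt M)) : Prop :=
  ∀ (n : ℕ) (p : Fin (n + 1) → Mt M), (∀ i, p i ∈ A) →
    ∑ i : Fin (n + 1), dist (p i).1.1 (p i).1.2 ≤
      ∑ i : Fin (n + 1), dist (p i).1.1 (p (i + 1)).1.2

/-- `π(A)`. -/
def piA (A : Set (Mt M)) : Set M := {z | ∃ p ∈ A, p.1.1 = z ∨ p.1.2 = z}

/-- The pair `(u,v)` as an element of `M̃`. -/
def pr {M : Type*} (u v : M) (h : u ≠ v) : Mt M := ⟨(u, v), h⟩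

set_option maxHeartbeats 1000000
set_option linter.unusedSectionVars false
set_option linter.unusedVariables false

/- ### chain machinery -/

noncomputable def chCost (γ : ℝ) : M → List (Mt M) → M → ℝ
  | c, [], z => dist c z
  | c, q :: l, z => dist c q.1.1 - γ * dist q.1.1 q.1.2 + chCost γ q.1.2 l z

noncomputable def Fq (γ : ℝ) (a b : Mt M) : ℝ :=
  dist a.1.1 b.1.2 - γ * dist a.1.1 a.1.2

noncomputable def cyc (γ : ℝ) (q₀ : Mt M) : Mt M → List (Mt M) → ℝ
  | a, [] => Fq γ q₀ a
  | a, b :: l => Fq γ b a + cyc γ q₀ b l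

def nthQ : Mt M → List (Mt M) → ℕ → Mt M
  | a, _, 0 => a
  | a, [], _ + 1 => a
  | _, b :: l, k + 1 => nthQ b l k

lemma nthQ_zero (a : Mt M) (l : List (Mt M)) : nthQ a l 0 = a := by
  cases l <;> rfl

lemma nthQ_succ (a b : Mt M) (l : List (Mt M)) (k : ℕ) :
    nthQ a (b :: l) (k + 1) = nthQ b l k := rfl

lemma nthQ_mem : ∀ (l : List (Mt M)) (a : Mt M) (k : ℕ),
    nthQ a l k = a ∨ nthQ a l k ∈ l
  | _, a, 0 => Or.inl (nthQ_zero a _)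
  | [], a, k + 1 => Or.inl rfl
  | b :: l, a, k + 1 => by
      rcases nthQ_mem l b k with h | h
      · exact Or.inr (by rw [nthQ, h]; exact List.mem_cons_self)
      · exact Or.inr (by rw [nthQ]; exact List.mem_cons_of_mem _ h)

lemma chCost_append (γ : ℝ) (q : Mt M) (z : M) :
    ∀ (l : List (Mt M)) (c : M), chCost γ c (l ++ [q]) z
      = chCost γ c l q.1.1 - γ * dist q.1.1 q.1.2 + dist q.1.2 z
  | [], c => by simp [chCost]
  | b :: l, c => by
      rw [List.cons_append]
      show dist c b.1.1 - γ * dist b.1.1 b.1.2 + chCost γ b.1.2 (l ++ [q]) z = _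
      rw [chCost_append γ q z l]
      show _ = dist c b.1.1 - γ * dist b.1.1 b.1.2 + chCost γ b.1.2 l q.1.1
        - γ * dist q.1.1 q.1.2 + dist q.1.2 z
      ring

lemma chCost_dist_le (γ : ℝ) (z z' : M) :
    ∀ (l : List (Mt M)) (c : M), chCost γ c l z' ≤ chCost γ c l z + dist z z'
  | [], c => by simpa [chCost] using dist_triangle c z z'
  | b :: l, c => by
      show dist c b.1.1 - γ * dist b.1.1 b.1.2 + chCost γ b.1.2 l z' ≤
        dist c b.1.1 - γ * dist b.1.1 b.1.2 + chCost γ b.1.2 l z + dist z z'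
      have := chCost_dist_le γ z z' l b.1.2
      linarith

lemma chCost_eq (γ : ℝ) (z : M) :
    ∀ (l : List (Mt M)) (q₀ a : Mt M), chCost γ a.1.2 l z
      = cyc γ q₀ a l + γ * dist q₀.1.1 q₀.1.2 - dist q₀.1.1 (nthQ a l l.length).1.2
        + dist (nthQ a l l.length).1.2 z
  | [], q₀, a => by
      show dist a.1.2 z = Fq γ q₀ a + γ * dist q₀.1.1 q₀.1.2 - dist q₀.1.1 a.1.2
        + dist a.1.2 z
      rw [Fq]; ring
  | b :: l, q₀, a => by
      show dist a.1.2 b.1.1 - γ * dist b.1.1 b.1.2 + chCost γ b.1.2 l z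
        = (Fq γ b a + cyc γ q₀ b l) + γ * dist q₀.1.1 q₀.1.2
          - dist q₀.1.1 (nthQ b l l.length).1.2 + dist (nthQ b l l.length).1.2 z
      rw [chCost_eq γ z l q₀ b, Fq, dist_comm a.1.2 b.1.1]
      ring

lemma cyc_sum (γ : ℝ) : ∀ (l : List (Mt M)) (q₀ a : Mt M),
    cyc γ q₀ a l = (∑ j : Fin l.length, Fq γ (nthQ a l (j.1 + 1)) (nthQ a l j.1))
      + Fq γ q₀ (nthQ a l l.length)
  | [], q₀, a => by simp [cyc, nthQ]
  | b :: l, q₀, a => by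
      show Fq γ b a + cyc γ q₀ b l = _
      rw [cyc_sum γ l q₀ b]
      show _ = (∑ j : Fin (l.length + 1), Fq γ (nthQ a (b :: l) (j.1 + 1)) (nthQ a (b :: l) j.1))
        + Fq γ q₀ (nthQ a (b :: l) (l.length + 1))
      rw [Fin.sum_univ_succ]
      simp only [nthQ_zero, nthQ_succ, Fin.val_succ, Fin.val_zero]
      ring

lemma gammaCM_sum (γ : ℝ) {A : Set (Mt M)} (hCM : GammaCM γ A)
    (n : ℕ) (P : Fin (n + 1) → Mt M) (hP : ∀ i, P i ∈ A) :
    0 ≤ ∑ k : Fin (n + 1), Fq γ (P (k + 1)) (P k) := by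
  have h := hCM n (fun i => P (-i)) (fun i => hP _)
  have hle : ∑ i : Fin (n + 1),
      min (dist (P (-i)).1.1 (P (-(i+1))).1.2 - γ * dist (P (-i)).1.1 (P (-i)).1.2)
          (dist (P (-i)).1.2 (P (-(i+1))).1.2)
      ≤ ∑ i : Fin (n + 1), Fq γ (P (-i)) (P (-i - 1)) := by
    apply Finset.sum_le_sum
    intro i _
    have hi : -(i + 1) = -i - 1 := by abel
    rw [hi]
    exact min_le_left _ _
  have hre : ∑ i : Fin (n + 1), Fq γ (P (-i)) (P (-i - 1))
      = ∑ k : Fin (n + 1), Fq γ (P (k + 1)) (P k) := by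
    apply Fintype.sum_bijective (fun k : Fin (n+1) => -k - 1)
      (Function.Involutive.bijective (fun k => by show -(-k - 1) - 1 = k; abel))
    intro i
    show Fq γ (P (-i)) (P (-i - 1)) = Fq γ (P (-i - 1 + 1)) (P (-i - 1))
    have h1 : -i - 1 + 1 = -i := by abel
    rw [h1]
  calc (0:ℝ) ≤ _ := h
    _ ≤ _ := hle
    _ = _ := hre

lemma cyc_nonneg (γ : ℝ) {A : Set (Mt M)} (hCM : GammaCM γ A)
    (q : Mt M) (l : List (Mt M)) (hq : q ∈ A) (hl : ∀ r ∈ l, r ∈ A) :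
    0 ≤ cyc γ q q l := by
  set n := l.length with hn
  set P : Fin (n + 1) → Mt M := fun i => nthQ q l i.1 with hPdef
  have hP : ∀ i, P i ∈ A := by
    intro i
    rcases nthQ_mem l q i.1 with h | h
    · rw [hPdef]; simp only []; rw [h]; exact hq
    · exact hl _ h
  have hsum := gammaCM_sum γ hCM n P hP
  rw [Fin.sum_univ_castSucc] at hsum
  have hwrap : (Fin.last n : Fin (n+1)) + 1 = 0 := Fin.last_add_one n
  have hterm : ∀ j : Fin n, Fq γ (P (j.castSucc + 1)) (P j.castSucc)
      = Fq γ (nthQ q l (j.1 + 1)) (nthQ q l j.1) := by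
    intro j
    rw [Fin.coeSucc_eq_succ]
    rfl
  rw [Finset.sum_congr rfl fun j _ => hterm j, hwrap] at hsum
  have hlast : P (Fin.last n) = nthQ q l n := rfl
  have h0 : P 0 = q := nthQ_zero q l
  rw [hlast, h0] at hsum
  rw [cyc_sum]
  exact hsum

lemma chCost_lb (γ : ℝ) {A : Set (Mt M)} (hCM : GammaCM γ A) (c z : M) :
    ∀ l : List (Mt M), (∀ r ∈ l, r ∈ A) → -dist c z ≤ chCost γ c l z := by
  intro l hl
  match l with
  | [] =>
      have := dist_nonneg (x := c) (y := z)
      show -dist c z ≤ dist c z; linarith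
  | q :: l' =>
      have hq : q ∈ A := hl q (List.mem_cons_self)
      have hl' : ∀ r ∈ l', r ∈ A := fun r hr => hl r (List.mem_cons_of_mem _ hr)
      have hcyc := cyc_nonneg γ hCM q l' hq hl'
      have heq := chCost_eq γ z l' q q
      show -dist c z ≤ dist c q.1.1 - γ * dist q.1.1 q.1.2 + chCost γ q.1.2 l' z
      rw [heq]
      set w := (nthQ q l' l'.length).1.2
      have t1 : dist q.1.1 w ≤ dist q.1.1 c + dist c z + dist z w := by
        calc dist q.1.1 w ≤ dist q.1.1 z + dist z w := dist_triangle _ _ _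
          _ ≤ (dist q.1.1 c + dist c z) + dist z w := by
              have := dist_triangle q.1.1 c z; linarith
      have t2 : dist c q.1.1 = dist q.1.1 c := dist_comm _ _
      have t3 : dist w z = dist z w := dist_comm _ _
      linarith

noncomputable def chF (γ : ℝ) (A : Set (Mt M)) (base : M) (z : M) : ℝ :=
  sInf {r | ∃ l : List (Mt M), (∀ q ∈ l, q ∈ A) ∧ r = chCost γ base l z}

lemma chF_set_nonempty (γ : ℝ) (A : Set (Mt M)) (base z : M) :
    {r | ∃ l : List (Mt M), (∀ q ∈ l, q ∈ A) ∧ r = chCost γ base l z}.Nonempty :=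
  ⟨dist base z, [], fun q h => absurd h List.not_mem_nil, rfl⟩

lemma chF_set_bdd (γ : ℝ) {A : Set (Mt M)} (hCM : GammaCM γ A) (base z : M) :
    BddBelow {r | ∃ l : List (Mt M), (∀ q ∈ l, q ∈ A) ∧ r = chCost γ base l z} := by
  refine ⟨-dist base z, ?_⟩
  rintro r ⟨l, hl, rfl⟩
  exact chCost_lb γ hCM base z l hl

lemma chF_le (γ : ℝ) {A : Set (Mt M)} (hCM : GammaCM γ A) (base z : M)
    (l : List (Mt M)) (hl : ∀ q ∈ l, q ∈ A) :
    chF γ A base z ≤ chCost γ base l z :=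
  csInf_le (chF_set_bdd γ hCM base z) ⟨l, hl, rfl⟩

lemma exists_good_f (γ : ℝ) (hγ : 0 < γ) (A : Set (Mt M)) (base : M)
    (hCM : GammaCM γ A) :
    ∃ f : M → ℝ, f base = 0 ∧ LipschitzWith 1 f ∧ ∀ p ∈ A, γ ≤ mQ f p := by
  set f : M → ℝ := chF γ A base with hf
  have hbase : f base = 0 := by
    apply le_antisymm
    · have := chF_le γ hCM base base [] (fun q h => absurd h List.not_mem_nil)
      simpa [chCost] using this
    · apply le_csInf (chF_set_nonempty γ A base base)
      rintro r ⟨l, hl, rfl⟩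
      have := chCost_lb γ hCM base base l hl
      simpa using this
  have hlipkey : ∀ z z' : M, f z' ≤ f z + dist z z' := by
    intro z z'
    have : f z' - dist z z' ≤ f z := by
      apply le_csInf (chF_set_nonempty γ A base z)
      rintro r ⟨l, hl, rfl⟩
      have h1 : f z' ≤ chCost γ base l z' := chF_le γ hCM base z' l hl
      have h2 := chCost_dist_le γ z z' l base
      linarith
    linarith
  have hlip : LipschitzWith 1 f := by
    apply LipschitzWith.of_dist_le_mul
    intro x y
    rw [NNReal.coe_one, one_mul, Real.dist_eq, abs_sub_le_iff]
    constructor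
    · have := hlipkey y x; rw [dist_comm] at this; linarith
    · have := hlipkey x y; linarith
  refine ⟨f, hbase, hlip, ?_⟩
  intro p hp
  have hd : 0 < dist p.1.1 p.1.2 := dist_pos.2 p.2
  have hkey : f p.1.2 + γ * dist p.1.1 p.1.2 ≤ f p.1.1 := by
    have : f p.1.2 + γ * dist p.1.1 p.1.2 - γ * dist p.1.1 p.1.2 * 0 ≤ f p.1.1 := by
      apply le_csInf (chF_set_nonempty γ A base p.1.1)
      rintro r ⟨l, hl, rfl⟩
      have hl' : ∀ q ∈ l ++ [p], q ∈ A := by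
        intro q hq
        rcases List.mem_append.1 hq with h | h
        · exact hl q h
        · rcases List.mem_singleton.1 h with rfl; exact hp
      have h1 : f p.1.2 ≤ chCost γ base (l ++ [p]) p.1.2 :=
        chF_le γ hCM base p.1.2 _ hl'
      rw [chCost_append] at h1
      rw [dist_self] at h1
      linarith
    linarith
  rw [mQ, le_div_iff₀ hd]
  linarith



open Classical in
lemma indicLp_apply (A : Set (Mt M)) (p : Mt M) :
    (indicLp A : Mt M → ℝ) p = if p ∈ A then 1 else 0 := by
  show A.indicator 1 p = _
  rw [Set.indicator_apply]
  rfl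

lemma coe_apply_le_norm (h : ellInfty M) (p : Mt M) : |(h : Mt M → ℝ) p| ≤ ‖h‖ :=
  lp.norm_apply_le_norm ENNReal.top_ne_zero h p

lemma smul_indic_apply (c : ℝ) (A : Set (Mt M)) (p : Mt M) :
    ((c • indicLp A : ellInfty M) : Mt M → ℝ) p = c * (indicLp A : Mt M → ℝ) p := by
  have h := lp.coeFn_smul c (indicLp A : ellInfty M)
  rw [h]
  rfl

lemma neg_apply_lp (v : ellInfty M) (p : Mt M) :
    ((-v : ellInfty M) : Mt M → ℝ) p = -((v : Mt M → ℝ) p) := by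
  have h := lp.coeFn_neg v
  rw [h]
  rfl

lemma lam_mono {Λ : ellInfty M →L[ℝ] ℝ} (hΛ : IsPositive Λ) {g h : ellInfty M}
    (hle : ∀ p : Mt M, (g : Mt M → ℝ) p ≤ (h : Mt M → ℝ) p) : Λ g ≤ Λ h := by
  have h0 := hΛ (h - g) (by
    intro p
    have hsub : ((h - g : ellInfty M) : Mt M → ℝ) = ⇑h - ⇑g := lp.coeFn_sub h g
    rw [hsub]
    simpa using hle p)
  have h1 : Λ (h - g) = Λ h - Λ g := map_sub Λ h g
  linarith

lemma lam_indic_nonneg {Λ : ellInfty M →L[ℝ] ℝ} (hΛ : IsPositive Λ) (A : Set (Mt M)) :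
    0 ≤ Λ (indicLp A) := by
  apply hΛ
  intro p
  rw [indicLp_apply]
  split_ifs <;> norm_num

lemma norm_indicLp_le (A : Set (Mt M)) : ‖(indicLp A : ellInfty M)‖ ≤ 1 := by
  apply lp.norm_le_of_forall_le zero_le_one
  intro p
  show |(indicLp A : Mt M → ℝ) p| ≤ 1
  rw [indicLp_apply]
  split_ifs <;> simp

lemma norm_lam_eq {Λ : ellInfty M →L[ℝ] ℝ} (hΛ : IsPositive Λ) :
    ‖Λ‖ = Λ (indicLp Set.univ) := by
  apply le_antisymm
  · apply ContinuousLinearMap.opNorm_le_bound Λ (lam_indic_nonneg hΛ _)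
    intro h
    have hub : ∀ p : Mt M, (h : Mt M → ℝ) p
        ≤ ((‖h‖ • indicLp Set.univ : ellInfty M) : Mt M → ℝ) p := by
      intro p
      rw [smul_indic_apply, indicLp_apply]
      simp only [Set.mem_univ, if_true, mul_one]
      exact (abs_le.1 (coe_apply_le_norm h p)).2
    have hlb : ∀ p : Mt M, ((-(‖h‖ • indicLp Set.univ) : ellInfty M) : Mt M → ℝ) p
        ≤ (h : Mt M → ℝ) p := by
      intro p
      rw [neg_apply_lp, smul_indic_apply, indicLp_apply]
      simp only [Set.mem_univ, if_true, mul_one]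
      have := (abs_le.1 (coe_apply_le_norm h p)).1
      linarith
    have hu := lam_mono hΛ hub
    have hl := lam_mono hΛ hlb
    rw [map_smul] at hu
    rw [map_neg, map_smul] at hl
    simp only [smul_eq_mul] at hu hl
    rw [Real.norm_eq_abs, abs_le]
    exact ⟨by linarith, by linarith⟩
  · calc Λ (indicLp Set.univ) ≤ ‖Λ (indicLp Set.univ)‖ := le_abs_self _
      _ ≤ ‖Λ‖ * ‖(indicLp (Set.univ : Set (Mt M)) : ellInfty M)‖ := Λ.le_opNorm _
      _ ≤ ‖Λ‖ * 1 := mul_le_mul_of_nonneg_left (norm_indicLp_le _) (norm_nonneg Λ)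
      _ = ‖Λ‖ := mul_one _

lemma comp_norm_le (base : M) (Λ : ellInfty M →L[ℝ] ℝ) :
    ‖Λ.comp (LipO M base).subtypeL‖ ≤ ‖Λ‖ := by
  apply ContinuousLinearMap.opNorm_le_bound _ (norm_nonneg Λ)
  intro g
  have hn : ‖((LipO M base).subtypeL g : ellInfty M)‖ = ‖g‖ := rfl
  calc ‖(Λ.comp (LipO M base).subtypeL) g‖
      ≤ ‖Λ‖ * ‖((LipO M base).subtypeL g : ellInfty M)‖ := Λ.le_opNorm _
    _ = ‖Λ‖ * ‖g‖ := by rw [hn]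

lemma mQ_abs_le {f : M → ℝ} (hf : LipschitzWith 1 f) (p : Mt M) : |mQ f p| ≤ 1 := by
  have hd : 0 < dist p.1.1 p.1.2 := dist_pos.2 p.2
  have h1 : |f p.1.1 - f p.1.2| ≤ dist p.1.1 p.1.2 := by
    have := hf.dist_le_mul p.1.1 p.1.2
    simpa [Real.dist_eq] using this
  rw [mQ, abs_div, abs_of_pos hd, div_le_one hd]
  exact h1

lemma lip_of_mem {base : M} (g : ↥(LipO M base)) (hg : ‖g‖ ≤ 1)
    {f : M → ℝ} (hf : ∀ p : Mt M, ((g : ellInfty M) : Mt M → ℝ) p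
      = (f p.1.1 - f p.1.2) / dist p.1.1 p.1.2) : LipschitzWith 1 f := by
  apply LipschitzWith.of_dist_le_mul
  intro x y
  rw [NNReal.coe_one, one_mul, Real.dist_eq]
  by_cases hxy : x = y
  · subst hxy; simp
  · have hd : 0 < dist x y := dist_pos.2 hxy
    have h1 := coe_apply_le_norm (g : ellInfty M) ⟨(x, y), hxy⟩
    rw [hf ⟨(x, y), hxy⟩] at h1
    have h2 : ‖(g : ellInfty M)‖ = ‖g‖ := rfl
    rw [h2] at h1
    have h3 : |(f x - f y) / dist x y| ≤ 1 := le_trans h1 hg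
    rw [abs_div, abs_of_pos hd, div_le_one hd] at h3
    exact h3

lemma add_apply' (v w : ellInfty M) (p : Mt M) :
    ((v + w : ellInfty M) : Mt M → ℝ) p = (v : Mt M → ℝ) p + (w : Mt M → ℝ) p := by
  have h := lp.coeFn_add v w
  rw [h]
  rfl

lemma dir_i_ii {base : M} {Λ : ellInfty M →L[ℝ] ℝ} (hΛ : IsPositive Λ)
    (hnorm : ‖Λ.comp (LipO M base).subtypeL‖ = ‖Λ‖) (γ : ℝ) (hγ0 : 0 < γ) (hγ1 : γ < 1) :
    ∃ (A : Set (Mt M)) (f : M → ℝ), f base = 0 ∧ LipschitzWith 1 f ∧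
      γ * Λ (indicLp Set.univ) ≤ Λ (indicLp A) ∧ ∀ p ∈ A, γ ≤ mQ f p := by
  set c := Λ (indicLp (Set.univ : Set (Mt M))) with hc
  have hc0 : 0 ≤ c := lam_indic_nonneg hΛ _
  rcases eq_or_lt_of_le hc0 with hceq | hcpos
  · refine ⟨∅, 0, rfl,
      LipschitzWith.of_dist_le_mul (fun x y => by
        simp only [Pi.zero_apply, dist_self, NNReal.coe_one, one_mul]
        exact dist_nonneg), ?_, fun p hp => absurd hp (Set.notMem_empty p)⟩
    have h0 := lam_indic_nonneg hΛ (∅ : Set (Mt M))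
    rw [← hceq]
    simpa using h0
  · set γ' : ℝ := (γ * (2 - γ) + 1) / 2 with hγ'
    have hγ'1 : γ' < 1 := by rw [hγ']; nlinarith [sq_nonneg (1 - γ)]
    have hγ'γ : γ' - γ = (1 - γ ^ 2) / 2 := by rw [hγ']; ring
    have hγ'pos : 0 < γ' := by rw [hγ']; nlinarith
    have hlt : γ' * c < ‖Λ.comp (LipO M base).subtypeL‖ := by
      rw [hnorm, norm_lam_eq hΛ, ← hc]
      nlinarith
    have hnot : ¬ ‖Λ.comp (LipO M base).subtypeL‖ ≤ γ' * c := not_le.2 hlt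
    rw [ContinuousLinearMap.opNorm_le_iff (by positivity)] at hnot
    push_neg at hnot
    obtain ⟨g, hg⟩ := hnot
    have hTg : (Λ.comp (LipO M base).subtypeL) g = Λ (g : ellInfty M) := rfl
    rw [hTg, Real.norm_eq_abs] at hg
    have hgpos : 0 < ‖g‖ := by
      rcases (norm_nonneg g).eq_or_lt with h | h
      · exfalso
        have hg0 : g = 0 := by rwa [eq_comm, norm_eq_zero] at h
        rw [hg0] at hg
        simp at hg
      · exact h
    obtain ⟨s, hs1, hs2⟩ : ∃ s : ℝ, |s| = 1 ∧ γ' * c * ‖g‖ < s * Λ (g : ellInfty M) := by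
      rcases abs_cases (Λ (g : ellInfty M)) with ⟨heq, _⟩ | ⟨heq, _⟩
      · exact ⟨1, abs_one, by rw [one_mul, ← heq]; exact hg⟩
      · exact ⟨-1, by simp, by rw [neg_one_mul, ← heq]; exact hg⟩
    set r : ℝ := s * ‖g‖⁻¹ with hr
    set u : ↥(LipO M base) := r • g with hu
    have hucoe : (u : ellInfty M) = r • (g : ellInfty M) := Submodule.coe_smul r g
    have hunorm : ‖u‖ ≤ 1 := by
      have h0 : ‖u‖ = ‖(u : ellInfty M)‖ := rfl
      have h1 : ‖(g : ellInfty M)‖ = ‖g‖ := rfl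
      rw [h0, hucoe, norm_smul, Real.norm_eq_abs, hr, abs_mul, hs1, one_mul,
        abs_of_pos (inv_pos.2 hgpos), h1, inv_mul_cancel₀ (ne_of_gt hgpos)]
    have hΛu : γ' * c < Λ (u : ellInfty M) := by
      rw [hucoe, map_smul, smul_eq_mul, hr]
      have h1 : ‖g‖⁻¹ * (γ' * c * ‖g‖) < ‖g‖⁻¹ * (s * Λ (g : ellInfty M)) :=
        mul_lt_mul_of_pos_left hs2 (inv_pos.2 hgpos)
      have h2 : ‖g‖⁻¹ * (γ' * c * ‖g‖) = γ' * c := by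
        rw [show ‖g‖⁻¹ * (γ' * c * ‖g‖) = ‖g‖⁻¹ * ‖g‖ * (γ' * c) by ring,
          inv_mul_cancel₀ (ne_of_gt hgpos), one_mul]
      rw [h2] at h1
      calc γ' * c < ‖g‖⁻¹ * (s * Λ (g : ellInfty M)) := h1
        _ = s * ‖g‖⁻¹ * Λ (g : ellInfty M) := by ring
    obtain ⟨f, hfb, hfeq⟩ := u.2
    have hflip : LipschitzWith 1 f := lip_of_mem u hunorm hfeq
    set A : Set (Mt M) := {p | γ ≤ ((u : ellInfty M) : Mt M → ℝ) p} with hA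
    have hub : ∀ p : Mt M, ((u : ellInfty M) : Mt M → ℝ) p
        ≤ (((1 - γ) • indicLp A + γ • indicLp Set.univ : ellInfty M) : Mt M → ℝ) p := by
      intro p
      rw [add_apply', smul_indic_apply, smul_indic_apply, indicLp_apply, indicLp_apply]
      simp only [Set.mem_univ, if_true, mul_one]
      by_cases hp : p ∈ A
      · rw [if_pos hp]
        have h1 := coe_apply_le_norm (u : ellInfty M) p
        have h2 : ‖(u : ellInfty M)‖ = ‖u‖ := rfl
        rw [h2] at h1
        have := (abs_le.1 (h1.trans hunorm)).2
        linarith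
      · rw [if_neg hp]
        have : ¬ γ ≤ ((u : ellInfty M) : Mt M → ℝ) p := hp
        push_neg at this
        linarith
    have hmono := lam_mono hΛ hub
    rw [map_add, map_smul, map_smul, smul_eq_mul, smul_eq_mul, ← hc] at hmono
    have hmeas : γ * c ≤ Λ (indicLp A) := by
      nlinarith [lam_indic_nonneg hΛ A]
    refine ⟨A, f, hfb, hflip, hmeas, ?_⟩
    intro p hp
    have : γ ≤ ((u : ellInfty M) : Mt M → ℝ) p := hp
    rwa [hfeq p] at this

lemma dir_ii_i {base : M} {Λ : ellInfty M →L[ℝ] ℝ} (hΛ : IsPositive Λ)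
    (H : ∀ γ : ℝ, 0 < γ → γ < 1 →
      ∃ (A : Set (Mt M)) (f : M → ℝ), f base = 0 ∧ LipschitzWith 1 f ∧
        γ * Λ (indicLp Set.univ) ≤ Λ (indicLp A) ∧ ∀ p ∈ A, γ ≤ mQ f p) :
    ‖Λ.comp (LipO M base).subtypeL‖ = ‖Λ‖ := by
  refine le_antisymm (comp_norm_le base Λ) ?_
  rw [norm_lam_eq hΛ]
  set c := Λ (indicLp (Set.univ : Set (Mt M))) with hc
  set N := ‖Λ.comp (LipO M base).subtypeL‖ with hN
  have hN0 : 0 ≤ N := hN ▸ norm_nonneg (Λ.comp (LipO M base).subtypeL)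
  by_contra hlt
  push_neg at hlt
  have hcpos : 0 < c := lt_of_le_of_lt hN0 hlt
  set t : ℝ := N / c with ht
  have ht0 : 0 ≤ t := div_nonneg hN0 hcpos.le
  have ht1 : t < 1 := (div_lt_one hcpos).2 hlt
  have htc : N = t * c := by rw [ht]; field_simp
  set γ : ℝ := (2 + t) / 3 with hγ
  have hγ0 : 0 < γ := by rw [hγ]; linarith
  have hγ1 : γ < 1 := by rw [hγ]; linarith
  obtain ⟨A, f, hfb, hflip, hmeas, hmq⟩ := H γ hγ0 hγ1
  have hmem : Memℓp (fun p : Mt M => mQ f p) ∞ := memℓp_infty (by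
    refine ⟨1, ?_⟩
    rintro x ⟨p, rfl⟩
    exact mQ_abs_le hflip p)
  set G : ellInfty M := ⟨fun p : Mt M => mQ f p, hmem⟩ with hG
  have hGmem : G ∈ LipO M base := ⟨f, hfb, fun p => rfl⟩
  set u : ↥(LipO M base) := ⟨G, hGmem⟩ with hu
  have hGapp : ∀ p : Mt M, (G : Mt M → ℝ) p = mQ f p := fun p => rfl
  have hunorm : ‖u‖ ≤ 1 := by
    have : ‖(u : ellInfty M)‖ ≤ 1 :=
      lp.norm_le_of_forall_le zero_le_one (fun p => by
        show |mQ f p| ≤ 1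
        exact mQ_abs_le hflip p)
    exact this
  have hlb : ∀ p : Mt M,
      (((γ + 1) • indicLp A + (-1 : ℝ) • indicLp Set.univ : ellInfty M) : Mt M → ℝ) p
        ≤ (G : Mt M → ℝ) p := by
    intro p
    rw [add_apply', smul_indic_apply, smul_indic_apply, indicLp_apply, indicLp_apply,
      hGapp]
    simp only [Set.mem_univ, if_true, mul_one]
    by_cases hp : p ∈ A
    · rw [if_pos hp]
      have := hmq p hp
      linarith
    · rw [if_neg hp]
      have := (abs_le.1 (mQ_abs_le hflip p)).1
      linarith
  have hmono := lam_mono hΛ hlb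
  rw [map_add, map_smul, map_smul, smul_eq_mul, smul_eq_mul, ← hc] at hmono
  have hΛGle : Λ G ≤ N := by
    have h1 : Λ G = (Λ.comp (LipO M base).subtypeL) u := rfl
    calc Λ G ≤ |Λ G| := le_abs_self _
      _ = ‖(Λ.comp (LipO M base).subtypeL) u‖ := by rw [h1, Real.norm_eq_abs]
      _ ≤ N * ‖u‖ := (Λ.comp (LipO M base).subtypeL).le_opNorm u
      _ ≤ N * 1 := mul_le_mul_of_nonneg_left hunorm hN0
      _ = N := mul_one _
  have hkey : (γ + 1) * (γ * c) - c ≤ N := by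
    have := hmeas
    nlinarith
  rw [htc] at hkey
  have hγt : (γ + 1) * γ - 1 - t = (1 - t) ^ 2 / 9 := by rw [hγ]; ring
  nlinarith [sq_nonneg (1 - t)]

lemma gammaCM_of_f {γ : ℝ} {A : Set (Mt M)} {f : M → ℝ} (hflip : LipschitzWith 1 f)
    (hmq : ∀ p ∈ A, γ ≤ mQ f p) : GammaCM γ A := by
  intro n p hp
  have hfd : ∀ a b : M, f a - f b ≤ dist a b := by
    intro a b
    have h := hflip.dist_le_mul a b
    rw [NNReal.coe_one, one_mul, Real.dist_eq] at h
    exact le_trans (le_abs_self _) h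
  have key : ∀ i : Fin (n + 1), f (p i).1.2 - f (p (i + 1)).1.2 ≤
      min (dist (p i).1.1 (p (i + 1)).1.2 - γ * dist (p i).1.1 (p i).1.2)
          (dist (p i).1.2 (p (i + 1)).1.2) := by
    intro i
    apply le_min
    · have h1 := hfd (p i).1.1 (p (i + 1)).1.2
      have hd : 0 < dist (p i).1.1 (p i).1.2 := dist_pos.2 (p i).2
      have h2 := hmq (p i) (hp i)
      rw [mQ, le_div_iff₀ hd] at h2
      linarith
    · exact hfd _ _
  have hshift : ∑ i : Fin (n + 1), f (p (i + 1)).1.2 = ∑ i : Fin (n + 1), f (p i).1.2 :=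
    Fintype.sum_equiv (Equiv.addRight 1) _ _ (fun i => rfl)
  calc (0 : ℝ) = ∑ i : Fin (n + 1), f (p i).1.2 - ∑ i : Fin (n + 1), f (p (i + 1)).1.2 := by
        rw [hshift]; ring
    _ = ∑ i : Fin (n + 1), (f (p i).1.2 - f (p (i + 1)).1.2) := by
        rw [Finset.sum_sub_distrib]
    _ ≤ _ := Finset.sum_le_sum (fun i _ => key i)

theorem stmt2 (base : M) (Λ : ellInfty M →L[ℝ] ℝ) (hΛ : IsPositive Λ) :
    (‖Λ.comp (LipO M base).subtypeL‖ = ‖Λ‖ ↔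
      ∀ γ : ℝ, 0 < γ → γ < 1 →
        ∃ (A : Set (Mt M)) (f : M → ℝ), f base = 0 ∧ LipschitzWith 1 f ∧
          γ * Λ (indicLp Set.univ) ≤ Λ (indicLp A) ∧ ∀ p ∈ A, γ ≤ mQ f p) ∧
    (‖Λ.comp (LipO M base).subtypeL‖ = ‖Λ‖ ↔
      ∀ γ : ℝ, 0 < γ → γ < 1 →
        ∃ A : Set (Mt M), GammaCM γ A ∧ γ * Λ (indicLp Set.univ) ≤ Λ (indicLp A)) := by
  have hii : ‖Λ.comp (LipO M base).subtypeL‖ = ‖Λ‖ ↔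
      (∀ γ : ℝ, 0 < γ → γ < 1 →
        ∃ (A : Set (Mt M)) (f : M → ℝ), f base = 0 ∧ LipschitzWith 1 f ∧
          γ * Λ (indicLp Set.univ) ≤ Λ (indicLp A) ∧ ∀ p ∈ A, γ ≤ mQ f p) :=
    ⟨fun h γ h0 h1 => dir_i_ii hΛ h γ h0 h1, fun H => dir_ii_i hΛ H⟩
  have h23 : (∀ γ : ℝ, 0 < γ → γ < 1 →
        ∃ (A : Set (Mt M)) (f : M → ℝ), f base = 0 ∧ LipschitzWith 1 f ∧
          γ * Λ (indicLp Set.univ) ≤ Λ (indicLp A) ∧ ∀ p ∈ A, γ ≤ mQ f p) ↔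
      (∀ γ : ℝ, 0 < γ → γ < 1 →
        ∃ A : Set (Mt M), GammaCM γ A ∧ γ * Λ (indicLp Set.univ) ≤ Λ (indicLp A)) := by
    constructor
    · intro H γ h0 h1
      obtain ⟨A, f, _, hflip, hmeas, hmq⟩ := H γ h0 h1
      exact ⟨A, gammaCM_of_f hflip hmq, hmeas⟩
    · intro H γ h0 h1
      obtain ⟨A, hCM, hmeas⟩ := H γ h0 h1
      obtain ⟨f, hfb, hflip, hmq⟩ := exists_good_f γ h0 A base hCM
      exact ⟨A, f, hfb, hflip, hmeas, hmq⟩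
  exact ⟨hii, hii.trans h23⟩
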